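/- Fix real constants m₀ > 0, ω > 0, ħ > 0, a > -1, γ > 1/2, set λ₀ = √(m₀ω/ħ) and α' = (1/2)·( (2γ-1)/(a+1) + 1 ). For a nonnegative integer m let L_m^{(α')}(t) = Σ_{k=0}^{m} (-1)^k · Γ(m+α'+1) / ( Γ(k+α'+1)·(m-k)!·k! ) · t^k be the generalized Laguerre polynomial, and define ψ_{2m+1}(x) = (λ₀²x²)^{(3a+2γ-1)/4}·x·exp( -(λ₀²x²)^{a+1}/(2(a+1)) )·L_m^{(α')}( (λ₀²x²)^{a+1}/(a+1) ). Then for every x ≠ 0: ψ_{2m+1}''(x) - (2a/x)·ψ_{2m+1}'(x) + [ ( a(3a+2)/4 - (a+1)(γ-1/2) - (γ-1/2)² )·x⁻² + κ²λ₀^{2a}|x|^{2a} - λ₀^{4a+4}|x|^{4a}x² ]·ψ_{2m+1}(x) = 0, where κ² = λ₀²·( (a+1)(4m+3) + 2γ - 1 ); equivalently ψ_{2m+1} solves the odd-parity Schrödinger equation with energy E_{2m+1} = ħ²κ²/(2m₀) = (a+1)·ħω·( 2m + 3/2 + (γ-1/2)/(a+1) ). -/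

import Mathlib

/-- The generalized Laguerre polynomial
`L_m^(α)(t) = Σ_{k=0}^{m} (-1)^k·Γ(m+α+1)/(Γ(k+α+1)·(m-k)!·k!)·t^k`. -/
noncomputable def lagPoly (α : ℝ) (m : ℕ) (t : ℝ) : ℝ :=
  ∑ k ∈ Finset.range (m + 1),
    (-1 : ℝ) ^ k * Real.Gamma ((m : ℝ) + α + 1)
      / (Real.Gamma ((k : ℝ) + α + 1) * (Nat.factorial (m - k) : ℝ) * (Nat.factorial k : ℝ))
      * t ^ k

noncomputable def lagC (α : ℝ) (m k : ℕ) : ℝ :=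
  (-1 : ℝ) ^ k * Real.Gamma ((m : ℝ) + α + 1)
      / (Real.Gamma ((k : ℝ) + α + 1) * (Nat.factorial (m - k) : ℝ) * (Nat.factorial k : ℝ))

noncomputable def lagD (α : ℝ) (m : ℕ) (t : ℝ) : ℝ :=
  ∑ k ∈ Finset.range (m + 1), lagC α m k * ((k : ℝ) * t ^ (k - 1))

noncomputable def lagD2 (α : ℝ) (m : ℕ) (t : ℝ) : ℝ :=
  ∑ k ∈ Finset.range (m + 1), lagC α m k * ((k : ℝ) * (((k - 1 : ℕ) : ℝ) * t ^ (k - 1 - 1)))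

lemma lagPoly_eq (α : ℝ) (m : ℕ) (t : ℝ) :
    lagPoly α m t = ∑ k ∈ Finset.range (m + 1), lagC α m k * t ^ k := rfl

lemma hasDerivAt_lagPoly (α : ℝ) (m : ℕ) (t : ℝ) :
    HasDerivAt (lagPoly α m) (lagD α m t) t := by
  have : ∀ k ∈ Finset.range (m + 1),
      HasDerivAt (fun t : ℝ => lagC α m k * t ^ k) (lagC α m k * ((k : ℝ) * t ^ (k - 1))) t :=
    fun k _ => (hasDerivAt_pow k t).const_mul _
  exact HasDerivAt.fun_sum this

lemma hasDerivAt_lagD (α : ℝ) (m : ℕ) (t : ℝ) :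
    HasDerivAt (lagD α m) (lagD2 α m t) t := by
  have : ∀ k ∈ Finset.range (m + 1),
      HasDerivAt (fun t : ℝ => lagC α m k * ((k : ℝ) * t ^ (k - 1)))
        (lagC α m k * ((k : ℝ) * (((k - 1 : ℕ) : ℝ) * t ^ (k - 1 - 1)))) t := by
    intro k _
    have := (hasDerivAt_pow (k - 1) t).const_mul (lagC α m k * (k : ℝ))
    simpa [mul_assoc] using this
  exact HasDerivAt.fun_sum this

lemma lagC_rec (α : ℝ) (hα : 0 < α) (m k : ℕ) (hk : k < m) :
    lagC α m (k + 1) * ((k : ℝ) + 1) * ((k : ℝ) + 1 + α) + lagC α m k * ((m : ℝ) - k) = 0 := by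
  have hΓpos : 0 < Real.Gamma ((k : ℝ) + α + 1) :=
    Real.Gamma_pos_of_pos (by positivity)
  have hrec : Real.Gamma ((k : ℝ) + 1 + α + 1) = ((k : ℝ) + α + 1) * Real.Gamma ((k : ℝ) + α + 1) := by
    have := Real.Gamma_add_one (by positivity : ((k : ℝ) + α + 1) ≠ 0)
    rw [show (k : ℝ) + 1 + α + 1 = (k : ℝ) + α + 1 + 1 by ring, this]
  have hfac : ((m - k).factorial : ℝ) = ((m : ℝ) - k) * ((m - (k + 1)).factorial : ℝ) := by
    have h1 : m - k = (m - (k + 1)) + 1 := by omega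
    rw [h1, Nat.factorial_succ]
    push_cast
    have : ((m - (k + 1) : ℕ) : ℝ) = (m : ℝ) - k - 1 := by
      have : (m - (k+1) : ℕ) = m - (k+1) := rfl
      push_cast [Nat.cast_sub (by omega : k + 1 ≤ m)]
      ring
    rw [this]; ring
  have hfk : ((k + 1).factorial : ℝ) = ((k : ℝ) + 1) * (k.factorial : ℝ) := by
    rw [Nat.factorial_succ]; push_cast; ring
  unfold lagC
  push_cast
  rw [hrec, hfac, hfk]
  have hmk : (0:ℝ) < (m : ℝ) - k := by
    have : (k:ℝ) < m := by exact_mod_cast hk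
    linarith
  have h2 : ((m - (k+1)).factorial : ℝ) ≠ 0 := by positivity
  have h3 : (k.factorial : ℝ) ≠ 0 := by positivity
  field_simp
  ring

lemma laguerre_ode (α : ℝ) (hα : 0 < α) (m : ℕ) (t : ℝ) :
    t * lagD2 α m t + (α + 1 - t) * lagD α m t + (m : ℝ) * lagPoly α m t = 0 := by
  have key : ∀ k, t * (lagC α m k * ((k : ℝ) * (((k - 1 : ℕ) : ℝ) * t ^ (k - 1 - 1))))
      + (α + 1 - t) * (lagC α m k * ((k : ℝ) * t ^ (k - 1)))
      + (m : ℝ) * (lagC α m k * t ^ k)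
      = lagC α m k * ((k:ℝ) * ((k:ℝ) + α)) * t ^ (k - 1)
        + lagC α m k * ((m:ℝ) - (k:ℝ)) * t ^ k := by
    intro k
    match k with
    | 0 => simp; ring
    | 1 => simp; ring
    | (n+2) =>
      have h1 : (n + 2) - 1 = n + 1 := rfl
      have h2 : (n + 1) - 1 = n := rfl
      rw [h1, h2]
      push_cast
      ring
  rw [lagPoly_eq]
  unfold lagD lagD2
  rw [Finset.mul_sum, Finset.mul_sum, Finset.mul_sum, ← Finset.sum_add_distrib,
    ← Finset.sum_add_distrib]
  rw [Finset.sum_congr rfl (fun k _ => key k)]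
  rw [Finset.sum_add_distrib]
  have hA : ∑ k ∈ Finset.range (m + 1), lagC α m k * ((k:ℝ) * ((k:ℝ) + α)) * t ^ (k - 1)
      = ∑ k ∈ Finset.range m,
          lagC α m (k+1) * (((k:ℝ)+1) * (((k:ℝ)+1) + α)) * t ^ k := by
    rw [Finset.sum_range_succ']
    simp
  have hB : ∑ k ∈ Finset.range (m + 1), lagC α m k * ((m:ℝ) - (k:ℝ)) * t ^ k
      = ∑ k ∈ Finset.range m, lagC α m k * ((m:ℝ) - (k:ℝ)) * t ^ k := by
    rw [Finset.sum_range_succ]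
    simp
  rw [hA, hB, ← Finset.sum_add_distrib]
  apply Finset.sum_eq_zero
  intro k hk
  have hkm : k < m := Finset.mem_range.mp hk
  have h := lagC_rec α hα m k hkm
  have : lagC α m (k+1) * (((k:ℝ)+1) * (((k:ℝ)+1) + α)) * t ^ k
      + lagC α m k * ((m:ℝ) - (k:ℝ)) * t ^ k
      = (lagC α m (k + 1) * ((k : ℝ) + 1) * ((k : ℝ) + 1 + α)
          + lagC α m k * ((m : ℝ) - k)) * t ^ k := by ring
  rw [this, h, zero_mul]

/-- The odd-parity parabose wavefunction
`ψ_{2m+1}(x) = (λ₀²x²)^((3a+2γ-1)/4)·x·exp(-(λ₀²x²)^(a+1)/(2(a+1)))·L_m^(α')((λ₀²x²)^(a+1)/(a+1))`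
with `α' = ((2γ-1)/(a+1) + 1)/2`. -/
noncomputable def psiOdd (lam a γ : ℝ) (m : ℕ) (x : ℝ) : ℝ :=
  (lam ^ 2 * x ^ 2) ^ ((3 * a + 2 * γ - 1) / 4) * x
    * Real.exp (-((lam ^ 2 * x ^ 2) ^ (a + 1)) / (2 * (a + 1)))
    * lagPoly ((1 / 2) * ((2 * γ - 1) / (a + 1) + 1)) m ((lam ^ 2 * x ^ 2) ^ (a + 1) / (a + 1))

/-- First derivative of `psiOdd` (valid for `x ≠ 0`). -/
noncomputable def psiD (lam a γ : ℝ) (m : ℕ) (x : ℝ) : ℝ :=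
  (lam ^ 2 * x ^ 2) ^ ((3 * a + 2 * γ - 1) / 4)
    * Real.exp (-((lam ^ 2 * x ^ 2) ^ (a + 1)) / (2 * (a + 1)))
    * ((2 * ((3 * a + 2 * γ - 1) / 4) + 1 - (lam ^ 2 * x ^ 2) ^ (a + 1))
        * lagPoly ((1 / 2) * ((2 * γ - 1) / (a + 1) + 1)) m ((lam ^ 2 * x ^ 2) ^ (a + 1) / (a + 1))
      + 2 * (lam ^ 2 * x ^ 2) ^ (a + 1)
        * lagD ((1 / 2) * ((2 * γ - 1) / (a + 1) + 1)) m ((lam ^ 2 * x ^ 2) ^ (a + 1) / (a + 1)))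

/-- Second derivative of `psiOdd` (valid for `x ≠ 0`). -/
noncomputable def psiD2 (lam a γ : ℝ) (m : ℕ) (x : ℝ) : ℝ :=
  (lam ^ 2 * x ^ 2) ^ ((3 * a + 2 * γ - 1) / 4)
    * Real.exp (-((lam ^ 2 * x ^ 2) ^ (a + 1)) / (2 * (a + 1)))
    * (((2 * ((3 * a + 2 * γ - 1) / 4) - (lam ^ 2 * x ^ 2) ^ (a + 1))
          * (2 * ((3 * a + 2 * γ - 1) / 4) + 1 - (lam ^ 2 * x ^ 2) ^ (a + 1))
          - 2 * (a + 1) * (lam ^ 2 * x ^ 2) ^ (a + 1))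
        * lagPoly ((1 / 2) * ((2 * γ - 1) / (a + 1) + 1)) m ((lam ^ 2 * x ^ 2) ^ (a + 1) / (a + 1))
      + (8 * ((3 * a + 2 * γ - 1) / 4) * (lam ^ 2 * x ^ 2) ^ (a + 1)
          - 4 * ((lam ^ 2 * x ^ 2) ^ (a + 1)) ^ 2 + (4 * a + 6) * (lam ^ 2 * x ^ 2) ^ (a + 1))
        * lagD ((1 / 2) * ((2 * γ - 1) / (a + 1) + 1)) m ((lam ^ 2 * x ^ 2) ^ (a + 1) / (a + 1))
      + 4 * ((lam ^ 2 * x ^ 2) ^ (a + 1)) ^ 2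
        * lagD2 ((1 / 2) * ((2 * γ - 1) / (a + 1) + 1)) m ((lam ^ 2 * x ^ 2) ^ (a + 1) / (a + 1)))
    / x

lemma hasDerivAt_psiOdd (lam a γ : ℝ) (m : ℕ) (x : ℝ)
    (hlam : lam ≠ 0) (ha1 : a + 1 ≠ 0) (hx : x ≠ 0) :
    HasDerivAt (psiOdd lam a γ m) (psiD lam a γ m x) x := by
  set α := (1 / 2) * ((2 * γ - 1) / (a + 1) + 1) with hαdef
  set p := (3 * a + 2 * γ - 1) / 4 with hpdef
  have hs : (0:ℝ) < lam ^ 2 * x ^ 2 := by positivity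
  have h1 : HasDerivAt (fun y : ℝ => lam ^ 2 * y ^ 2) (lam ^ 2 * (2 * x ^ 1)) x := by
    simpa using (hasDerivAt_pow 2 x).const_mul (lam ^ 2)
  have hF : HasDerivAt (fun y : ℝ => (lam ^ 2 * y ^ 2) ^ p)
      (lam ^ 2 * (2 * x ^ 1) * p * (lam ^ 2 * x ^ 2) ^ (p - 1)) x :=
    h1.rpow_const (Or.inl hs.ne')
  have hv : HasDerivAt (fun y : ℝ => (lam ^ 2 * y ^ 2) ^ (a + 1))
      (lam ^ 2 * (2 * x ^ 1) * (a + 1) * (lam ^ 2 * x ^ 2) ^ (a + 1 - 1)) x :=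
    h1.rpow_const (Or.inl hs.ne')
  have hE : HasDerivAt (fun y : ℝ => Real.exp (-((lam ^ 2 * y ^ 2) ^ (a + 1)) / (2 * (a + 1))))
      (Real.exp (-((lam ^ 2 * x ^ 2) ^ (a + 1)) / (2 * (a + 1)))
        * (-(lam ^ 2 * (2 * x ^ 1) * (a + 1) * (lam ^ 2 * x ^ 2) ^ (a + 1 - 1)) / (2 * (a + 1)))) x :=
    (hv.neg.div_const (2 * (a + 1))).exp
  have hu : HasDerivAt (fun y : ℝ => (lam ^ 2 * y ^ 2) ^ (a + 1) / (a + 1))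
      (lam ^ 2 * (2 * x ^ 1) * (a + 1) * (lam ^ 2 * x ^ 2) ^ (a + 1 - 1) / (a + 1)) x :=
    hv.div_const (a + 1)
  have hP : HasDerivAt (fun y : ℝ => lagPoly α m ((lam ^ 2 * y ^ 2) ^ (a + 1) / (a + 1)))
      (lagD α m ((lam ^ 2 * x ^ 2) ^ (a + 1) / (a + 1))
        * (lam ^ 2 * (2 * x ^ 1) * (a + 1) * (lam ^ 2 * x ^ 2) ^ (a + 1 - 1) / (a + 1))) x :=
    (hasDerivAt_lagPoly α m _).comp x hu
  have hψ := ((hF.mul (hasDerivAt_id' (𝕜 := ℝ) x)).mul hE).mul hP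
  have hfun : psiOdd lam a γ m = fun y =>
      ((lam ^ 2 * y ^ 2) ^ p * y * Real.exp (-((lam ^ 2 * y ^ 2) ^ (a + 1)) / (2 * (a + 1))))
        * lagPoly α m ((lam ^ 2 * y ^ 2) ^ (a + 1) / (a + 1)) := rfl
  rw [hfun]
  refine hψ.congr_deriv ?_
  have e1 : (lam ^ 2 * x ^ 2) ^ (p - 1) = (lam ^ 2 * x ^ 2) ^ p / (lam ^ 2 * x ^ 2) := by
    rw [Real.rpow_sub hs, Real.rpow_one]
  have e2 : (lam ^ 2 * x ^ 2) ^ (a + 1 - 1) = (lam ^ 2 * x ^ 2) ^ (a + 1) / (lam ^ 2 * x ^ 2) := by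
    rw [Real.rpow_sub hs, Real.rpow_one]
  rw [psiD, e1, e2, ← hαdef, ← hpdef]
  simp only [Pi.mul_apply, Pi.add_apply]
  field_simp
  ring

lemma hasDerivAt_psiD (lam a γ : ℝ) (m : ℕ) (x : ℝ)
    (hlam : lam ≠ 0) (ha1 : a + 1 ≠ 0) (hx : x ≠ 0) :
    HasDerivAt (psiD lam a γ m) (psiD2 lam a γ m x) x := by
  set α := (1 / 2) * ((2 * γ - 1) / (a + 1) + 1) with hαdef
  set p := (3 * a + 2 * γ - 1) / 4 with hpdef
  have hs : (0:ℝ) < lam ^ 2 * x ^ 2 := by positivity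
  have h1 : HasDerivAt (fun y : ℝ => lam ^ 2 * y ^ 2) (lam ^ 2 * (2 * x ^ 1)) x := by
    simpa using (hasDerivAt_pow 2 x).const_mul (lam ^ 2)
  have hF : HasDerivAt (fun y : ℝ => (lam ^ 2 * y ^ 2) ^ p)
      (lam ^ 2 * (2 * x ^ 1) * p * (lam ^ 2 * x ^ 2) ^ (p - 1)) x :=
    h1.rpow_const (Or.inl hs.ne')
  have hv : HasDerivAt (fun y : ℝ => (lam ^ 2 * y ^ 2) ^ (a + 1))
      (lam ^ 2 * (2 * x ^ 1) * (a + 1) * (lam ^ 2 * x ^ 2) ^ (a + 1 - 1)) x :=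
    h1.rpow_const (Or.inl hs.ne')
  have hE : HasDerivAt (fun y : ℝ => Real.exp (-((lam ^ 2 * y ^ 2) ^ (a + 1)) / (2 * (a + 1))))
      (Real.exp (-((lam ^ 2 * x ^ 2) ^ (a + 1)) / (2 * (a + 1)))
        * (-(lam ^ 2 * (2 * x ^ 1) * (a + 1) * (lam ^ 2 * x ^ 2) ^ (a + 1 - 1)) / (2 * (a + 1)))) x :=
    (hv.neg.div_const (2 * (a + 1))).exp
  have hu : HasDerivAt (fun y : ℝ => (lam ^ 2 * y ^ 2) ^ (a + 1) / (a + 1))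
      (lam ^ 2 * (2 * x ^ 1) * (a + 1) * (lam ^ 2 * x ^ 2) ^ (a + 1 - 1) / (a + 1)) x :=
    hv.div_const (a + 1)
  have hP : HasDerivAt (fun y : ℝ => lagPoly α m ((lam ^ 2 * y ^ 2) ^ (a + 1) / (a + 1)))
      (lagD α m ((lam ^ 2 * x ^ 2) ^ (a + 1) / (a + 1))
        * (lam ^ 2 * (2 * x ^ 1) * (a + 1) * (lam ^ 2 * x ^ 2) ^ (a + 1 - 1) / (a + 1))) x :=
    (hasDerivAt_lagPoly α m _).comp x hu
  have hP1 : HasDerivAt (fun y : ℝ => lagD α m ((lam ^ 2 * y ^ 2) ^ (a + 1) / (a + 1)))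
      (lagD2 α m ((lam ^ 2 * x ^ 2) ^ (a + 1) / (a + 1))
        * (lam ^ 2 * (2 * x ^ 1) * (a + 1) * (lam ^ 2 * x ^ 2) ^ (a + 1 - 1) / (a + 1))) x :=
    (hasDerivAt_lagD α m _).comp x hu
  have hG := ((hv.const_sub (2 * p + 1)).mul hP).add (((hv.const_mul 2)).mul hP1)
  have hψ := (hF.mul hE).mul hG
  have hfun : psiD lam a γ m = fun y =>
      ((lam ^ 2 * y ^ 2) ^ p * Real.exp (-((lam ^ 2 * y ^ 2) ^ (a + 1)) / (2 * (a + 1))))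
        * ((2 * p + 1 - (lam ^ 2 * y ^ 2) ^ (a + 1))
            * lagPoly α m ((lam ^ 2 * y ^ 2) ^ (a + 1) / (a + 1))
          + 2 * (lam ^ 2 * y ^ 2) ^ (a + 1)
            * lagD α m ((lam ^ 2 * y ^ 2) ^ (a + 1) / (a + 1))) := by
    funext y; rw [psiD]
  rw [hfun]
  refine hψ.congr_deriv ?_
  have e1 : (lam ^ 2 * x ^ 2) ^ (p - 1) = (lam ^ 2 * x ^ 2) ^ p / (lam ^ 2 * x ^ 2) := by
    rw [Real.rpow_sub hs, Real.rpow_one]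
  have e2 : (lam ^ 2 * x ^ 2) ^ (a + 1 - 1) = (lam ^ 2 * x ^ 2) ^ (a + 1) / (lam ^ 2 * x ^ 2) := by
    rw [Real.rpow_sub hs, Real.rpow_one]
  rw [psiD2, e1, e2, ← hαdef, ← hpdef]
  simp only [Pi.mul_apply, Pi.add_apply]
  field_simp
  ring

lemma psi_ode (lam a γ : ℝ) (m : ℕ) (hlam : 0 < lam) (ha : -1 < a) (hγ : 1 / 2 < γ)
    (x : ℝ) (hx : x ≠ 0) :
    deriv (deriv (psiOdd lam a γ m)) x - (2 * a / x) * deriv (psiOdd lam a γ m) x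
        + ((a * (3 * a + 2) / 4 - (a + 1) * (γ - 1 / 2) - (γ - 1 / 2) ^ 2) * (x ^ 2)⁻¹
            + (lam ^ 2 * ((a + 1) * (4 * (m : ℝ) + 3) + 2 * γ - 1)) * lam ^ (2 * a) * |x| ^ (2 * a)
            - lam ^ (4 * a + 4) * |x| ^ (4 * a) * x ^ 2) * psiOdd lam a γ m x = 0 := by
  have ha1 : a + 1 ≠ 0 := by linarith
  have ha1' : (0:ℝ) < a + 1 := by linarith
  have hα : 0 < (1 / 2) * ((2 * γ - 1) / (a + 1) + 1) := by
    have : 0 < (2 * γ - 1) / (a + 1) := div_pos (by linarith) ha1'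
    linarith
  have hxa : (0:ℝ) < |x| := abs_pos.mpr hx
  have hd1 : deriv (psiOdd lam a γ m) x = psiD lam a γ m x :=
    (hasDerivAt_psiOdd lam a γ m x hlam.ne' ha1 hx).deriv
  have hmem : {(0:ℝ)}ᶜ ∈ nhds x := isOpen_compl_singleton.mem_nhds (by simpa using hx)
  have hev : deriv (psiOdd lam a γ m) =ᶠ[nhds x] psiD lam a γ m :=
    Filter.eventuallyEq_of_mem hmem fun y hy =>
      (hasDerivAt_psiOdd lam a γ m y hlam.ne' ha1 (by simpa using hy)).deriv
  have hd2 : deriv (deriv (psiOdd lam a γ m)) x = psiD2 lam a γ m x :=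
    hev.deriv_eq.trans (hasDerivAt_psiD lam a γ m x hlam.ne' ha1 hx).deriv
  rw [hd1, hd2]
  have hLpos : (0:ℝ) < lam ^ (2 * a) := Real.rpow_pos_of_pos hlam _
  have hXpos : (0:ℝ) < |x| ^ (2 * a) := Real.rpow_pos_of_pos hxa _
  have hprod : (0:ℝ) ≤ lam * |x| := by positivity
  have hprodpos : (0:ℝ) < lam * |x| := by positivity
  have hv_eq : (lam ^ 2 * x ^ 2) ^ (a + 1)
      = lam ^ (2 * a) * |x| ^ (2 * a) * (lam ^ 2 * x ^ 2) := by
    have h1 : lam ^ 2 * x ^ 2 = (lam * |x|) ^ (2:ℕ) := by rw [mul_pow, sq_abs]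
    rw [h1, ← Real.rpow_natCast (lam * |x|) 2, ← Real.rpow_mul hprod]
    push_cast
    rw [show (2:ℝ) * (a + 1) = 2 * a + 2 by ring, Real.rpow_add hprodpos,
      Real.mul_rpow hlam.le hxa.le, show ((2:ℝ)) = ((2:ℕ):ℝ) by norm_num,
      Real.rpow_natCast, mul_pow, sq_abs]
  have h4a : lam ^ (4 * a + 4) * |x| ^ (4 * a)
      = (lam ^ (2 * a)) ^ 2 * (|x| ^ (2 * a)) ^ 2 * lam ^ (4:ℕ) := by
    rw [show (4 * a + 4 : ℝ) = 2 * a + (2 * a + 4) by ring, Real.rpow_add hlam,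
      Real.rpow_add hlam, show (4 * a : ℝ) = 2 * a + 2 * a by ring, Real.rpow_add hxa,
      show (4:ℝ) = ((4:ℕ):ℝ) by norm_num, Real.rpow_natCast]
    ring
  rw [h4a]
  simp only [psiD2, psiD, psiOdd]
  rw [hv_eq]
  set α := (1 / 2) * ((2 * γ - 1) / (a + 1) + 1) with hαdef
  set L := lam ^ (2 * a) with hLdef
  set X := |x| ^ (2 * a) with hXdef
  set t₀ := L * X * (lam ^ 2 * x ^ 2) / (a + 1) with ht₀def
  have ht₀pos : 0 < t₀ := by
    rw [ht₀def]; positivity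
  have hLag := laguerre_ode α hα m t₀
  have hP2 : lagD2 α m t₀
      = ((t₀ - (α + 1)) * lagD α m t₀ - (m:ℝ) * lagPoly α m t₀) / t₀ := by
    field_simp
    linear_combination hLag
  rw [hP2, ht₀def, hαdef]
  field_simp
  ring

/-- `ψ_{2m+1}` solves the odd-parity Schrödinger equation of the deformed parabose
oscillator with `κ² = λ₀²((a+1)(4m+3)+2γ-1)`; equivalently the energy is
`E_{2m+1} = ħ²κ²/(2m₀) = (a+1)ħω(2m + 3/2 + (γ-1/2)/(a+1))`. -/
theorem stmt17 (m₀ ω hbar a γ : ℝ) (hm₀ : 0 < m₀) (hω : 0 < ω) (hhb : 0 < hbar)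
    (ha : -1 < a) (hγ : 1 / 2 < γ)
    (lam : ℝ) (hlam : lam = Real.sqrt (m₀ * ω / hbar)) (m : ℕ) :
    (∀ x : ℝ, x ≠ 0 →
      deriv (deriv (psiOdd lam a γ m)) x - (2 * a / x) * deriv (psiOdd lam a γ m) x
        + ((a * (3 * a + 2) / 4 - (a + 1) * (γ - 1 / 2) - (γ - 1 / 2) ^ 2) * (x ^ 2)⁻¹
            + (lam ^ 2 * ((a + 1) * (4 * (m : ℝ) + 3) + 2 * γ - 1)) * lam ^ (2 * a) * |x| ^ (2 * a)
            - lam ^ (4 * a + 4) * |x| ^ (4 * a) * x ^ 2) * psiOdd lam a γ m x = 0) ∧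
    hbar ^ 2 * (lam ^ 2 * ((a + 1) * (4 * (m : ℝ) + 3) + 2 * γ - 1)) / (2 * m₀)
      = (a + 1) * hbar * ω * (2 * (m : ℝ) + 3 / 2 + (γ - 1 / 2) / (a + 1)) := by
  have hq : (0:ℝ) < m₀ * ω / hbar := by positivity
  have hlampos : 0 < lam := hlam ▸ Real.sqrt_pos.mpr hq
  have hlamsq : lam ^ 2 = m₀ * ω / hbar := by
    rw [hlam, Real.sq_sqrt hq.le]
  constructor
  · exact fun x hx => psi_ode lam a γ m hlampos ha hγ x hx
  · rw [hlamsq]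
    have ha1 : a + 1 ≠ 0 := by linarith
    field_simp
    ring
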